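/- Let q ∈ [1, 2], p its Hölder conjugate (1/p + 1/q = 1), and let w, w* ∈ ℝ^d with ‖w‖_q = ‖w*‖_q = 1, ‖w‖_2 < ‖w*‖_2, and angle θ = ∠(w, w*). Define w' = w·‖w*‖_2/‖w‖_2. Then ‖w'‖_q ≤ 1 + ‖w*‖_2·θ·d^{1/q − 1/2}, and consequently ‖w‖_2 ≥ ‖w*‖_2/(1 + ‖w*‖_2·θ·d^{1/q − 1/2}). -/

import Mathlib

open scoped ENNReal BigOperators
open MeasureTheory

noncomputable def lpNorm (p : ℝ≥0∞) {d : ℕ} (v : Fin d → ℝ) : ℝ :=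
  if p = ∞ then ⨆ i, |v i| else (∑ i, |v i| ^ p.toReal) ^ (1 / p.toReal)

def dot {d : ℕ} (v x : Fin d → ℝ) : ℝ := ∑ i, v i * x i

private lemma abs_rpow_two (x : ℝ) : |x| ^ (2:ℝ) = x ^ 2 := by
  rw [show (2:ℝ) = ((2:ℕ):ℝ) by norm_num, Real.rpow_natCast, sq_abs]

private lemma lpNorm_two_eq_sqrt {d : ℕ} (v : Fin d → ℝ) :
    lpNorm 2 v = Real.sqrt (∑ i, v i ^ 2) := by
  have : ((2:ℝ≥0∞)).toReal = (2:ℝ) := by simp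
  simp only [_root_.lpNorm, if_neg (by simp : (2:ℝ≥0∞) ≠ ∞), this]
  rw [Real.sqrt_eq_rpow]
  congr 1
  exact Finset.sum_congr rfl fun i _ => abs_rpow_two _

private lemma lq_le_l2 {d : ℕ} (z : Fin d → ℝ) {qr : ℝ} (h1 : 1 ≤ qr) (h2 : qr ≤ 2) :
    (∑ i, |z i| ^ qr) ^ (1/qr) ≤
      (d : ℝ) ^ (1/qr - 1/2) * (∑ i, |z i| ^ (2:ℝ)) ^ ((1:ℝ)/2) := by
  have hqr0 : 0 < qr := lt_of_lt_of_le one_pos h1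
  have hp : (1:ℝ) ≤ 2/qr := by rw [le_div_iff₀ hqr0]; linarith
  have key := Real.inner_le_weight_mul_Lp_of_nonneg (Finset.univ (α := Fin d)) hp
      (fun _ => (1:ℝ)) (fun i => |z i| ^ qr) (fun _ => zero_le_one)
      (fun i => Real.rpow_nonneg (abs_nonneg _) _)
  simp only [one_mul, Finset.sum_const, Finset.card_univ, Fintype.card_fin, nsmul_eq_mul,
    mul_one] at key
  have hfp : ∀ i : Fin d, (|z i| ^ qr) ^ (2/qr) = |z i| ^ (2:ℝ) := by
    intro i
    rw [← Real.rpow_mul (abs_nonneg _)]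
    congr 1
    field_simp
  rw [Finset.sum_congr rfl fun i _ => hfp i] at key
  have hinv : (2/qr)⁻¹ = qr/2 := by field_simp
  rw [hinv] at key
  have hS2 : (0:ℝ) ≤ ∑ i, |z i| ^ (2:ℝ) :=
    Finset.sum_nonneg fun i _ => Real.rpow_nonneg (abs_nonneg _) _
  have hd : (0:ℝ) ≤ (d:ℝ) := Nat.cast_nonneg _
  calc (∑ i, |z i| ^ qr) ^ (1/qr)
      ≤ ((d:ℝ) ^ (1 - qr/2) * (∑ i, |z i| ^ (2:ℝ)) ^ (qr/2)) ^ (1/qr) := by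
        apply Real.rpow_le_rpow (Finset.sum_nonneg fun i _ => Real.rpow_nonneg (abs_nonneg _) _)
          key (by positivity)
    _ = (d:ℝ) ^ (1/qr - 1/2) * (∑ i, |z i| ^ (2:ℝ)) ^ ((1:ℝ)/2) := by
        rw [Real.mul_rpow (Real.rpow_nonneg hd _) (Real.rpow_nonneg hS2 _),
          ← Real.rpow_mul hd, ← Real.rpow_mul hS2,
          show (1 - qr/2) * (1/qr) = 1/qr - 1/2 by
            rw [show (1 - qr/2) * (1/qr) = 1/qr - (qr * (1/qr))/2 by ring, mul_one_div,
              div_self (ne_of_gt hqr0)],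
          show (qr/2) * (1/qr) = (1:ℝ)/2 by
            rw [show (qr/2) * (1/qr) = (qr * (1/qr))/2 by ring, mul_one_div,
              div_self (ne_of_gt hqr0)]]

theorem stmt_15 {d : ℕ} (p q : ℝ≥0∞) (hq1 : 1 ≤ q) (hq2 : q ≤ 2)
    (hpq : 1 / p + 1 / q = 1)
    (w wstar : Fin d → ℝ) (hwq : lpNorm q w = 1) (hwsq : lpNorm q wstar = 1)
    (hnorm : lpNorm 2 w < lpNorm 2 wstar)
    (θ : ℝ) (hθ : θ = Real.arccos (dot w wstar / (lpNorm 2 w * lpNorm 2 wstar)))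
    (w' : Fin d → ℝ) (hw' : w' = (lpNorm 2 wstar / lpNorm 2 w) • w) :
    lpNorm q w' ≤ 1 + lpNorm 2 wstar * θ * (d : ℝ) ^ (1 / q.toReal - 1 / 2) ∧
    lpNorm 2 wstar / (1 + lpNorm 2 wstar * θ * (d : ℝ) ^ (1 / q.toReal - 1 / 2))
      ≤ lpNorm 2 w := by
  have hqt : q ≠ ⊤ := ne_top_of_le_ne_top (by simp) hq2
  set qr := q.toReal with hqr
  have h1 : (1:ℝ) ≤ qr := by
    have := ENNReal.toReal_mono hqt hq1
    simpa using this
  have h2 : qr ≤ 2 := by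
    have := ENNReal.toReal_mono (by simp : (2:ℝ≥0∞) ≠ ⊤) hq2
    simpa using this
  have hqr0 : 0 < qr := lt_of_lt_of_le one_pos h1
  have lq_eq : ∀ v : Fin d → ℝ, lpNorm q v = (∑ i, |v i| ^ qr) ^ (1/qr) := by
    intro v; simp only [_root_.lpNorm, if_neg hqt]; rfl
  -- w ≠ 0
  have hw_ne : ∃ i, w i ≠ 0 := by
    by_contra h
    push_neg at h
    rw [lq_eq] at hwq
    simp only [h, abs_zero, Real.zero_rpow (ne_of_gt hqr0), Finset.sum_const_zero] at hwq
    rw [Real.zero_rpow (by positivity)] at hwq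
    norm_num at hwq
  obtain ⟨i0, hi0⟩ := hw_ne
  set nw := lpNorm 2 w with hnw_def
  set r := lpNorm 2 wstar with hr_def
  have hsum_pos : 0 < ∑ i, w i ^ 2 := by
    apply Finset.sum_pos' (fun i _ => sq_nonneg _)
    exact ⟨i0, Finset.mem_univ _, by positivity⟩
  have hnw_pos : 0 < nw := by
    rw [hnw_def, lpNorm_two_eq_sqrt]; exact Real.sqrt_pos.mpr hsum_pos
  have hr_pos : 0 < r := lt_trans hnw_pos hnorm
  set c := r / nw with hc_def
  have hc_pos : 0 < c := div_pos hr_pos hnw_pos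
  -- scaling of lpNorms
  have hw'i : ∀ i, w' i = c * w i := by
    intro i; rw [hw']; simp [hc_def]
  have hw'q : lpNorm q w' = c := by
    rw [lq_eq]
    have : ∀ i : Fin d, |w' i| ^ qr = c ^ qr * |w i| ^ qr := by
      intro i
      rw [hw'i i, abs_mul, abs_of_pos hc_pos,
        Real.mul_rpow (le_of_lt hc_pos) (abs_nonneg _)]
    rw [Finset.sum_congr rfl fun i _ => this i, ← Finset.mul_sum,
      Real.mul_rpow (by positivity) (Finset.sum_nonneg fun i _ =>
        Real.rpow_nonneg (abs_nonneg _) _),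
      ← Real.rpow_mul (le_of_lt hc_pos), mul_one_div, div_self (ne_of_gt hqr0),
      Real.rpow_one, ← lq_eq, hwq, mul_one]
  have hw'2 : lpNorm 2 w' = r := by
    rw [lpNorm_two_eq_sqrt]
    have : ∀ i : Fin d, w' i ^ 2 = c ^ 2 * w i ^ 2 := by
      intro i; rw [hw'i i]; ring
    rw [Finset.sum_congr rfl fun i _ => this i, ← Finset.mul_sum,
      Real.sqrt_mul (sq_nonneg c), Real.sqrt_sq (le_of_lt hc_pos), ← lpNorm_two_eq_sqrt,
      ← hnw_def, hc_def, div_mul_cancel₀ _ (ne_of_gt hnw_pos)]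
  -- Cauchy-Schwarz and arccos
  set t := dot w wstar / (nw * r) with ht_def
  have hconj : Real.HolderConjugate 2 2 := ⟨by norm_num, by norm_num, by norm_num⟩
  have l2_rpow : ∀ v : Fin d → ℝ, (∑ i, |v i| ^ (2:ℝ)) ^ ((1:ℝ)/2) = lpNorm 2 v := by
    intro v
    rw [lpNorm_two_eq_sqrt, Real.sqrt_eq_rpow]
    congr 1
    exact Finset.sum_congr rfl fun i _ => abs_rpow_two _
  have hCS : |dot w wstar| ≤ nw * r := by
    have h1' := Real.inner_le_Lp_mul_Lq Finset.univ w wstar hconj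
    have h2' := Real.inner_le_Lp_mul_Lq Finset.univ w (fun i => -wstar i) hconj
    simp only [abs_neg] at h2'
    rw [l2_rpow, l2_rpow] at h1'
    rw [l2_rpow, l2_rpow] at h2'
    rw [abs_le]
    constructor
    · have : ∑ i, w i * (-wstar i) = -(dot w wstar) := by
        simp [dot, Finset.sum_neg_distrib]
      rw [this] at h2'
      linarith
    · exact h1'
  have ht_mem : -1 ≤ t ∧ t ≤ 1 := by
    have habs : |t| ≤ 1 := by
      rw [ht_def, abs_div, abs_of_pos (mul_pos hnw_pos hr_pos)]
      exact div_le_one_of_le₀ hCS (le_of_lt (mul_pos hnw_pos hr_pos))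
    exact abs_le.mp habs
  have hcos : Real.cos θ = t := by
    rw [hθ]; exact Real.cos_arccos ht_mem.1 ht_mem.2
  have hθ_nonneg : 0 ≤ θ := hθ ▸ Real.arccos_nonneg _
  -- chord length bound
  have hdot_w' : dot w' wstar = t * r ^ 2 := by
    have : dot w' wstar = c * dot w wstar := by
      simp only [dot, hw'i, Finset.mul_sum, mul_assoc]
    rw [this, ht_def, hc_def]
    field_simp
  have hsum_w' : ∑ i, w' i ^ 2 = r ^ 2 := by
    have := hw'2
    rw [lpNorm_two_eq_sqrt] at this
    rw [← this, Real.sq_sqrt (Finset.sum_nonneg fun i _ => sq_nonneg _)]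
  have hsum_ws : ∑ i, wstar i ^ 2 = r ^ 2 := by
    have : r = Real.sqrt (∑ i, wstar i ^ 2) := by rw [hr_def, lpNorm_two_eq_sqrt]
    rw [this, Real.sq_sqrt (Finset.sum_nonneg fun i _ => sq_nonneg _)]
  have hchord : lpNorm 2 (fun i => w' i - wstar i) ≤ r * θ := by
    rw [lpNorm_two_eq_sqrt]
    have hexp : ∑ i, (w' i - wstar i) ^ 2 = 2 * r ^ 2 * (1 - t) := by
      have : ∀ i : Fin d, (w' i - wstar i) ^ 2
          = w' i ^ 2 - 2 * (w' i * wstar i) + wstar i ^ 2 := fun i => by ring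
      rw [Finset.sum_congr rfl fun i _ => this i]
      rw [Finset.sum_add_distrib, Finset.sum_sub_distrib, ← Finset.mul_sum]
      have : ∑ i, w' i * wstar i = t * r ^ 2 := hdot_w'
      rw [this, hsum_w', hsum_ws]
      ring
    rw [hexp]
    have hbound : 2 * r ^ 2 * (1 - t) ≤ (r * θ) ^ 2 := by
      have h := Real.one_sub_sq_div_two_le_cos (x := θ)
      rw [hcos] at h
      nlinarith [sq_nonneg r, sq_nonneg θ]
    calc Real.sqrt (2 * r ^ 2 * (1 - t)) ≤ Real.sqrt ((r * θ) ^ 2) :=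
          Real.sqrt_le_sqrt hbound
      _ = r * θ := Real.sqrt_sq (by positivity)
  -- part 1
  set X := r * θ * (d : ℝ) ^ (1 / qr - 1 / 2) with hX_def
  have hX_nonneg : 0 ≤ X := by
    apply mul_nonneg (mul_nonneg (le_of_lt hr_pos) hθ_nonneg)
    positivity
  have part1 : lpNorm q w' ≤ 1 + X := by
    have htri : lpNorm q w' ≤ lpNorm q wstar + lpNorm q (fun i => w' i - wstar i) := by
      rw [lq_eq, lq_eq, lq_eq]
      have := Real.Lp_add_le Finset.univ wstar (fun i => w' i - wstar i) h1
      simpa using this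
    have hcmp : lpNorm q (fun i => w' i - wstar i)
        ≤ (d : ℝ) ^ (1/qr - 1/2) * lpNorm 2 (fun i => w' i - wstar i) := by
      rw [lq_eq, ← l2_rpow]
      exact lq_le_l2 _ h1 h2
    have : lpNorm q w' ≤ 1 + (d : ℝ) ^ (1/qr - 1/2) * (r * θ) := by
      calc lpNorm q w' ≤ lpNorm q wstar + lpNorm q (fun i => w' i - wstar i) := htri
        _ ≤ 1 + (d : ℝ) ^ (1/qr - 1/2) * lpNorm 2 (fun i => w' i - wstar i) := by
            rw [hwsq]; gcongr
        _ ≤ 1 + (d : ℝ) ^ (1/qr - 1/2) * (r * θ) := by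
            gcongr
    calc lpNorm q w' ≤ 1 + (d : ℝ) ^ (1/qr - 1/2) * (r * θ) := this
      _ = 1 + X := by rw [hX_def]; ring
  refine ⟨part1, ?_⟩
  -- part 2
  have hkey : r / nw ≤ 1 + X := by rw [← hc_def, ← hw'q]; exact part1
  have h1X : 0 < 1 + X := by linarith
  rw [div_le_iff₀ h1X]
  rw [div_le_iff₀ hnw_pos] at hkey
  linarith [mul_comm nw (1 + X)]
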